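/- arXiv:1607.08077 — 5 statements merged into one kernel-verified Lean document; each statement's English description precedes it below -/
import Mathlib

section
/- Let n ≥ 1 and 0 ≤ r ≤ n, let V = ∑_{i=0}^{r} C(n,i) be the cardinality of a Hamming ball of radius r in {0,1}^n, and let N = ⌈n·ln 2 · 2^n / V⌉. If N centers y_1, …, y_N are chosen independently and uniformly at random from {0,1}^n, then with positive probability the balls of radius r around these centers cover all of {0,1}^n. Consequently, {0,1}^n can be covered by at most ⌈n·ln 2 · 2^n / V⌉ Hamming balls of radius r. -/
open Finset

lemma ball_card (n r : ℕ) (x : Fin n → Bool) :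
    ({z : Fin n → Bool | hammingDist x z ≤ r} : Finset _).card
      = ∑ i ∈ Finset.range (r + 1), n.choose i := by
  have key : ({z : Fin n → Bool | hammingDist x z ≤ r} : Finset _).card
      = ({s : Finset (Fin n) | s.card ≤ r} : Finset _).card := by
    apply Finset.card_bij' (fun z _ => ({i | x i ≠ z i} : Finset (Fin n)))
      (fun s _ => fun i => if i ∈ s then !(x i) else x i)
    · intro z hz
      simp only [mem_filter, mem_univ, true_and] at hz ⊢
      exact hz
    · intro s hs
      simp only [mem_filter, mem_univ, true_and] at hs ⊢
      have : ({i | x i ≠ (if i ∈ s then !(x i) else x i)} : Finset (Fin n)) = s := by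
        ext i
        by_cases h : i ∈ s <;> simp [h] <;> cases x i <;> simp
      unfold hammingDist
      rw [this]; exact hs
    · intro z hz
      funext i
      simp only [mem_filter, mem_univ, true_and]
      by_cases h' : x i ≠ z i
      · rw [if_pos h']; revert h'; cases x i <;> cases z i <;> simp
      · rw [if_neg h']; revert h'; cases x i <;> cases z i <;> simp
    · intro s hs
      ext i
      by_cases h : i ∈ s <;> simp [h] <;> cases x i <;> simp
  rw [key]
  have : ({s : Finset (Fin n) | s.card ≤ r} : Finset _)
      = (Finset.range (r+1)).biUnion (fun k => Finset.powersetCard k (univ : Finset (Fin n))) := by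
    ext s
    simp [Finset.mem_powersetCard, Nat.lt_succ_iff]
  rw [this, Finset.card_biUnion]
  · simp [Finset.card_powersetCard]
  · intro a _ b _ hab
    apply Finset.disjoint_left.2
    intro s hs hs'
    simp [Finset.mem_powersetCard] at hs hs'
    omega

lemma real_ineq (n V N : ℕ) (hn : 1 ≤ n) (hV1 : 1 ≤ V) (hV2 : V < 2 ^ n)
    (hN : (n : ℝ) * Real.log 2 * 2 ^ n / V ≤ N) (hN1 : 1 ≤ N) :
    2 ^ n * (2 ^ n - V) ^ N < (2 ^ n) ^ N := by
  have h2 : (0:ℝ) < 2 ^ n := by positivity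
  set m : ℝ := 2 ^ n with hm
  set v : ℝ := (V : ℝ) with hv
  have hv0 : (0:ℝ) < v := by rw [hv]; exact_mod_cast hV1
  have hvm : v < m := by rw [hm, hv]; exact_mod_cast hV2
  have hcast : ((2 ^ n - V : ℕ) : ℝ) = m - v := by
    rw [Nat.cast_sub hV2.le]; push_cast [hm, hv]; ring
  rw [← Nat.cast_lt (α := ℝ)]
  push_cast [hcast]
  set t : ℝ := v / m with ht
  have ht0 : 0 < t := by positivity
  have h1 : m - v < m * Real.exp (-t) := by
    have : 1 - t < Real.exp (-t) := by
      have := Real.add_one_lt_exp (x := -t) (by linarith)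
      linarith
    have h' : m * (1 - t) < m * Real.exp (-t) := by
      exact mul_lt_mul_of_pos_left this h2
    have : m * (1 - t) = m - v := by
      rw [ht, mul_sub, mul_one, mul_div_assoc', mul_comm m v, mul_div_assoc, div_self h2.ne', mul_one]
    linarith
  have h3 : (m - v) ^ N < (m * Real.exp (-t)) ^ N :=
    pow_lt_pow_left₀ h1 (by linarith) (by omega)
  have h4 : (m * Real.exp (-t)) ^ N = m ^ N * Real.exp (-(t * N)) := by
    rw [mul_pow, ← Real.exp_nat_mul]
    ring_nf
  have h5 : (n : ℝ) * Real.log 2 ≤ t * N := by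
    rw [ht]
    rw [div_le_iff₀ (by positivity)] at hN
    rw [div_mul_eq_mul_div, le_div_iff₀ h2]
    calc (n:ℝ) * Real.log 2 * m ≤ N * v := by linarith [hN]
      _ = v * N := by ring
  have h6 : m * Real.exp (-(t * N)) ≤ 1 := by
    have : Real.exp (-(t * N)) ≤ Real.exp (-((n:ℝ) * Real.log 2)) :=
      Real.exp_le_exp.2 (by linarith)
    have he : Real.exp (-((n:ℝ) * Real.log 2)) = 1 / m := by
      rw [Real.exp_neg, Real.exp_nat_mul, Real.exp_log (by norm_num)]
      simp [hm]
    rw [he] at this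
    calc m * Real.exp (-(t * N)) ≤ m * (1 / m) := by
          exact mul_le_mul_of_nonneg_left this h2.le
      _ = 1 := by field_simp
  have hmN : (0:ℝ) < m ^ N := by positivity
  calc m * (m - v) ^ N < m * (m ^ N * Real.exp (-(t * N))) := by
        rw [← h4]
        exact mul_lt_mul_of_pos_left h3 h2
    _ = m ^ N * (m * Real.exp (-(t * N))) := by ring
    _ ≤ m ^ N * 1 := mul_le_mul_of_nonneg_left h6 hmN.le
    _ = m ^ N := by ring

/-- The Boolean cube `{0,1}^n` can be covered by `⌈n·ln 2·2^n/V⌉` Hamming balls of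
radius `r`, where `V` is the cardinality of such a ball. -/
theorem stmt_7 (n r : ℕ) (hn : 1 ≤ n) (hr : r ≤ n) :
    ∃ y : Fin (⌈(n : ℝ) * Real.log 2 * 2 ^ n /
        ((∑ i ∈ Finset.range (r + 1), n.choose i : ℕ) : ℝ)⌉₊) → (Fin n → Bool),
      ∀ x : Fin n → Bool, ∃ i, hammingDist x (y i) ≤ r := by
  set V : ℕ := ∑ i ∈ Finset.range (r + 1), n.choose i with hVdef
  set N : ℕ := ⌈(n : ℝ) * Real.log 2 * 2 ^ n / (V : ℝ)⌉₊ with hNdef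
  have hV1 : 1 ≤ V := by
    calc 1 = n.choose 0 := by simp
      _ ≤ V := Finset.single_le_sum (fun i _ => Nat.zero_le _)
          (Finset.mem_range.2 (Nat.succ_pos r))
  have hV2 : V ≤ 2 ^ n := by
    calc V ≤ ∑ i ∈ Finset.range (n + 1), n.choose i :=
          Finset.sum_le_sum_of_subset (Finset.range_subset_range.2 (by omega))
      _ = 2 ^ n := Nat.sum_range_choose n
  have hVR : (0:ℝ) < (V:ℝ) := by exact_mod_cast hV1
  have hlog : 0 < Real.log 2 := Real.log_pos (by norm_num)
  have hnR : (0:ℝ) < (n:ℝ) := by exact_mod_cast hn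
  have hN1 : 1 ≤ N := by
    rw [hNdef]
    exact Nat.one_le_ceil_iff.2 (div_pos (by positivity) hVR)
  by_contra hcon
  push_neg at hcon
  set Bad : (Fin n → Bool) → Finset (Fin N → Fin n → Bool) :=
    fun x => Fintype.piFinset
      (fun _ => ({z : Fin n → Bool | ¬ hammingDist x z ≤ r} : Finset _)) with hBad
  have hsub : (Finset.univ : Finset (Fin N → Fin n → Bool)) ⊆ Finset.univ.biUnion Bad := by
    intro y _
    obtain ⟨x, hx⟩ := hcon y
    refine Finset.mem_biUnion.2 ⟨x, Finset.mem_univ _, Fintype.mem_piFinset.2 fun i => ?_⟩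
    simp only [Finset.mem_filter, Finset.mem_univ, true_and]
    exact not_le.2 (hx i)
  have hcardBad : ∀ x : Fin n → Bool, (Bad x).card = (2 ^ n - V) ^ N := by
    intro x
    rw [hBad]
    simp only [Fintype.card_piFinset, Finset.prod_const, Finset.card_univ, Fintype.card_fin]
    congr 1
    have h1 := Finset.card_filter_add_card_filter_not
      (s := (Finset.univ : Finset (Fin n → Bool)))
      (p := fun z : Fin n → Bool => hammingDist x z ≤ r)
    have hb := ball_card n r x
    have h2 : (Finset.univ : Finset (Fin n → Bool)).card = 2 ^ n := by
      simp [Finset.card_univ]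
    rw [← hVdef] at hb
    omega
  have hineq : (2 ^ n) ^ N ≤ 2 ^ n * (2 ^ n - V) ^ N := by
    calc (2 ^ n) ^ N = (Finset.univ : Finset (Fin N → Fin n → Bool)).card := by
          simp [Finset.card_univ]
      _ ≤ (Finset.univ.biUnion Bad).card := Finset.card_le_card hsub
      _ ≤ ∑ x : Fin n → Bool, (Bad x).card := Finset.card_biUnion_le
      _ = 2 ^ n * (2 ^ n - V) ^ N := by
          simp only [hcardBad, Finset.sum_const, Finset.card_univ, smul_eq_mul]
          simp
  rcases lt_or_eq_of_le hV2 with h | h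
  · exact absurd hineq (not_le.2 (real_ineq n V N hn hV1 h (Nat.le_ceil _) hN1))
  · rw [h, Nat.sub_self, zero_pow (by omega : N ≠ 0), Nat.mul_zero] at hineq
    exact absurd hineq (by have : 0 < (2 ^ n) ^ N := (by positivity); omega)
end

section
/- Let U be a finite set (the universe), T ⊆ U nonempty, and S a finite family of subsets of U such that every element of T belongs to at least μ ≥ 1 sets of S. Then there exists a subfamily G ⊆ S of size at most ⌈(|S|/μ) · ln|T|⌉ + 1 whose union contains T. -/
open scoped Classical

open Finset

private lemma ceil_step8 {x y : ℝ} (h1 : 1 ≤ x) (h2 : y ≤ x - 1) :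
    ⌈y⌉₊ + 1 ≤ ⌈x⌉₊ := by
  have hc : 1 ≤ ⌈x⌉₊ := Nat.one_le_ceil_iff.mpr (by linarith)
  have hle : y ≤ ((⌈x⌉₊ - 1 : ℕ) : ℝ) := by
    have hx := Nat.le_ceil x
    have : ((⌈x⌉₊ - 1 : ℕ) : ℝ) = (⌈x⌉₊ : ℝ) - 1 := by
      push_cast [Nat.cast_sub hc]; ring
    rw [this]; linarith
  have := Nat.ceil_le.mpr hle
  omega

private lemma log_step8 {N M m m' : ℝ} (hM : 1 ≤ M) (hm' : 1 ≤ m') (hN : 1 ≤ N)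
    (hm0 : 0 ≤ m) (h : N * m' ≤ (N - M) * m) :
    (N / M) * Real.log m' ≤ (N / M) * Real.log m - 1 ∧ 1 ≤ (N / M) * Real.log m := by
  have hNpos : (0:ℝ) < N := by linarith
  have hMpos : (0:ℝ) < M := by linarith
  have hm'pos : (0:ℝ) < m' := by linarith
  have hNm : (0:ℝ) < (N - M) * m := lt_of_lt_of_le (by nlinarith) h
  have hmpos : (0:ℝ) < m := by
    rcases eq_or_lt_of_le hm0 with h0 | h0
    · exfalso; rw [← h0] at hNm; simp at hNm
    · exact h0
  have hNM : (0:ℝ) < N - M := by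
    by_contra hcon
    push_neg at hcon
    nlinarith
  have hle : m' ≤ (N - M) / N * m := by
    rw [div_mul_eq_mul_div, le_div_iff₀ hNpos]
    linarith [h]
  have h1 : Real.log m' ≤ Real.log ((N - M) / N * m) :=
    Real.log_le_log hm'pos hle
  have h2 : Real.log ((N - M) / N * m) = Real.log ((N - M) / N) + Real.log m :=
    Real.log_mul (by positivity) (by positivity)
  have h3 : Real.log ((N - M) / N) ≤ (N - M) / N - 1 :=
    Real.log_le_sub_one_of_pos (by positivity)
  have h4 : (N - M) / N - 1 = -(M / N) := by field_simp; ring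
  have h5 : Real.log m' ≤ Real.log m - M / N := by linarith [h1, h2, h3, h4]
  have hdivpos : (0:ℝ) < N / M := by positivity
  have hkey : (N / M) * (M / N) = 1 := by field_simp
  constructor
  · have := mul_le_mul_of_nonneg_left h5 (le_of_lt hdivpos)
    nlinarith [this]
  · have hlm' : 0 ≤ Real.log m' := Real.log_nonneg hm'
    have := mul_le_mul_of_nonneg_left h5 (le_of_lt hdivpos)
    nlinarith [mul_nonneg (le_of_lt hdivpos) hlm']

/-- Greedy set-cover bound: if every element of a nonempty finite set `T` belongs to at
least `μ` sets of the family `S`, then some subfamily of size at most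
`⌈(|S|/μ)·ln|T|⌉ + 1` covers `T`. -/
theorem stmt_8 {U ι : Type*} [Fintype U] [Fintype ι] (T : Finset U) (hT : T.Nonempty)
    (S : ι → Finset U) (μ : ℕ) (hμ : 1 ≤ μ)
    (hcov : ∀ x ∈ T, μ ≤ (Finset.univ.filter fun i : ι => x ∈ S i).card) :
    ∃ G : Finset ι,
      G.card ≤ ⌈((Fintype.card ι : ℝ) / μ) * Real.log T.card⌉₊ + 1 ∧
      ∀ x ∈ T, ∃ i ∈ G, x ∈ S i := by
  classical
  obtain ⟨x0, hx0⟩ := hT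
  have hn1 : 1 ≤ Fintype.card ι := by
    have h1 := hcov x0 hx0
    have h2 : (Finset.univ.filter fun i : ι => x0 ∈ S i).card ≤ Fintype.card ι := by
      simpa using Finset.card_filter_le Finset.univ (fun i : ι => x0 ∈ S i)
    omega
  have hne : Nonempty ι := Fintype.card_pos_iff.mp hn1
  suffices H : ∀ m : ℕ, ∀ R : Finset U, R ⊆ T → R.card = m → R.Nonempty →
      ∃ G : Finset ι,
        G.card ≤ ⌈((Fintype.card ι : ℝ) / μ) * Real.log R.card⌉₊ + 1 ∧
        ∀ x ∈ R, ∃ i ∈ G, x ∈ S i by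
    exact H T.card T subset_rfl rfl ⟨x0, hx0⟩
  intro m
  induction m using Nat.strong_induction_on with
  | _ m IH =>
    intro R hRT hRm hRne
    -- counting
    have hcount : ∑ i : ι, (R.filter fun x => x ∈ S i).card
        = ∑ x ∈ R, (Finset.univ.filter fun i : ι => x ∈ S i).card := by
      simp only [Finset.card_filter]
      exact Finset.sum_comm
    have hsum : μ * R.card ≤ ∑ i : ι, (R.filter fun x => x ∈ S i).card := by
      rw [hcount]
      calc μ * R.card = ∑ _x ∈ R, μ := by rw [Finset.sum_const]; ring
        _ ≤ _ := Finset.sum_le_sum fun x hx => hcov x (hRT hx)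
    -- greedy choice
    obtain ⟨i, _, hi⟩ : ∃ i ∈ (Finset.univ : Finset ι),
        μ * R.card ≤ Fintype.card ι * (R.filter fun x => x ∈ S i).card := by
      apply Finset.exists_le_of_sum_le Finset.univ_nonempty
      calc ∑ _i : ι, μ * R.card = Fintype.card ι * (μ * R.card) := by
            rw [Finset.sum_const]; simp [mul_comm]
        _ ≤ Fintype.card ι * ∑ i : ι, (R.filter fun x => x ∈ S i).card :=
            Nat.mul_le_mul_left _ hsum
        _ = ∑ i : ι, Fintype.card ι * (R.filter fun x => x ∈ S i).card := by
            rw [Finset.mul_sum]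
    set c := (R.filter fun x => x ∈ S i).card with hc
    have hfi : R.filter (fun x => x ∈ S i) = R ∩ S i := Finset.filter_mem_eq_inter
    have hcard : c + (R \ S i).card = R.card := by
      rw [hc, hfi]; exact Finset.card_inter_add_card_sdiff R (S i)
    by_cases hR' : (R \ S i) = ∅
    · refine ⟨{i}, ?_, ?_⟩
      · simp
      · intro x hx
        refine ⟨i, Finset.mem_singleton_self i, ?_⟩
        by_contra hxi
        have : x ∈ R \ S i := Finset.mem_sdiff.mpr ⟨hx, hxi⟩
        simp [hR'] at this
    · have hR'ne : (R \ S i).Nonempty := Finset.nonempty_iff_ne_empty.mpr hR'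
      have hRcpos : 1 ≤ R.card := Finset.card_pos.mpr hRne
      have hcpos : 1 ≤ c := by
        by_contra hcon
        have : c = 0 := by omega
        rw [this, Nat.mul_zero] at hi
        have : 1 ≤ μ * R.card := Nat.one_le_iff_ne_zero.mpr (by positivity)
        omega
      have hlt : (R \ S i).card < m := by
        have := Finset.card_pos.mpr hR'ne
        omega
      obtain ⟨G', hG'1, hG'2⟩ := IH (R \ S i).card hlt (R \ S i)
        (fun x hx => hRT (Finset.mem_sdiff.mp hx).1) rfl hR'ne
      refine ⟨insert i G', ?_, ?_⟩
      · -- bound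
        have hnat : Fintype.card ι * (R \ S i).card + μ * R.card
            ≤ Fintype.card ι * R.card := by
          calc Fintype.card ι * (R \ S i).card + μ * R.card
              ≤ Fintype.card ι * (R \ S i).card + Fintype.card ι * c := by omega
            _ = Fintype.card ι * R.card := by
                have hh : (R \ S i).card + c = R.card := by omega
                rw [← Nat.mul_add, hh]
        have hreal : (Fintype.card ι : ℝ) * ((R \ S i).card : ℝ)
            ≤ ((Fintype.card ι : ℝ) - (μ : ℝ)) * (R.card : ℝ) := by
          have h' : ((Fintype.card ι * (R \ S i).card + μ * R.card : ℕ) : ℝ)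
              ≤ ((Fintype.card ι * R.card : ℕ) : ℝ) := Nat.cast_le.mpr hnat
          push_cast at h'
          nlinarith [h']
        have hls := log_step8 (by exact_mod_cast hμ)
          (by exact_mod_cast Finset.card_pos.mpr hR'ne)
          (by exact_mod_cast hn1) (by positivity) hreal
        have hstep := ceil_step8 hls.2 hls.1
        calc (insert i G').card ≤ G'.card + 1 := Finset.card_insert_le _ _
          _ ≤ ⌈((Fintype.card ι : ℝ) / μ) * Real.log ((R \ S i).card)⌉₊ + 2 := by omega
          _ ≤ ⌈((Fintype.card ι : ℝ) / μ) * Real.log R.card⌉₊ + 1 := by omega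
      · intro x hx
        by_cases hxi : x ∈ S i
        · exact ⟨i, Finset.mem_insert_self _ _, hxi⟩
        · obtain ⟨j, hj, hxj⟩ := hG'2 x (Finset.mem_sdiff.mpr ⟨hx, hxi⟩)
          exact ⟨j, Finset.mem_insert_of_mem hj, hxj⟩
end

section
/- Let U be a finite universe with |U| = 2^n, let F = (A_1, …, A_M) be a finite list of subsets of U, and let k, with 2^k ≥ (n+1)·ln 2, be given. Then there exists a subfamily G ⊆ {A_1,…,A_M} with |G| ≤ ⌈2·(n+1)·ln 2 · M · 2^{-k}⌉ such that every element u ∈ U that belongs to at least 2^k of the sets A_1,…,A_M belongs to some set in G. -/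
open scoped Classical

lemma cover_aux (M k : ℕ) {U : Type*} [Fintype U] (A : Fin M → Finset U) :
    ∀ s : ℕ, ∀ H : Finset U,
      (∀ u ∈ H, 2 ^ k ≤ (Finset.univ.filter fun i : Fin M => u ∈ A i).card) →
      ∃ G : Finset (Fin M), G.card ≤ s ∧
        ((H.filter fun u => ∀ i ∈ G, u ∉ A i).card : ℝ) ≤
          (H.card : ℝ) * (1 - 2 ^ k / M) ^ s := by
  intro s
  induction s with
  | zero =>
      intro H hH
      refine ⟨∅, le_refl 0, ?_⟩
      simp
  | succ s ih =>
      intro H hH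
      rcases H.eq_empty_or_nonempty with rfl | hne
      · exact ⟨∅, Nat.zero_le _, by simp⟩
      -- H nonempty : get 2^k ≤ M
      obtain ⟨u₀, hu₀⟩ := hne
      have hkM : 2 ^ k ≤ M := le_trans (hH u₀ hu₀) (by
        simpa using Finset.card_filter_le Finset.univ (fun i : Fin M => u₀ ∈ A i))
      have hM : 0 < M := lt_of_lt_of_le ((Nat.pow_pos (by norm_num) : 0 < 2 ^ k) |>.trans_le le_rfl) hkM
      -- double counting
      have hsum : ∑ u ∈ H, ((Finset.univ.filter fun i : Fin M => u ∈ A i).card) =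
          ∑ i : Fin M, (H.filter fun u => u ∈ A i).card := by
        simp only [Finset.card_filter]
        rw [Finset.sum_comm]
      have hlow : H.card * 2 ^ k ≤ ∑ i : Fin M, (H.filter fun u => u ∈ A i).card := by
        rw [← hsum]
        calc H.card * 2 ^ k = ∑ _u ∈ H, 2 ^ k := by rw [Finset.sum_const, smul_eq_mul]
        _ ≤ _ := Finset.sum_le_sum hH
      have hex : ∃ i : Fin M, H.card * 2 ^ k ≤ M * (H.filter fun u => u ∈ A i).card := by
        by_contra hcon
        push_neg at hcon
        have : ∑ i : Fin M, M * (H.filter fun u => u ∈ A i).card < M * (H.card * 2 ^ k) := by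
          calc ∑ i : Fin M, M * (H.filter fun u => u ∈ A i).card
              < ∑ _i : Fin M, H.card * 2 ^ k := by
                apply Finset.sum_lt_sum_of_nonempty
                · have : Nonempty (Fin M) := ⟨⟨0, hM⟩⟩
                  exact Finset.univ_nonempty
                · intro i _; exact hcon i
          _ = M * (H.card * 2 ^ k) := by simp [Finset.sum_const, mul_comm]
        rw [← Finset.mul_sum] at this
        exact absurd (Nat.mul_le_mul_left M hlow) (not_le.mpr this)
      obtain ⟨i₀, hi₀⟩ := hex
      set H' := H.filter (fun u => u ∉ A i₀) with hH'
      have hH'sub : ∀ u ∈ H', 2 ^ k ≤ (Finset.univ.filter fun i : Fin M => u ∈ A i).card :=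
        fun u hu => hH u (Finset.mem_filter.mp hu).1
      obtain ⟨G', hG'card, hG'bound⟩ := ih H' hH'sub
      refine ⟨insert i₀ G', le_trans (Finset.card_insert_le _ _) (Nat.succ_le_succ hG'card), ?_⟩
      have hsubset : (H.filter fun u => ∀ i ∈ insert i₀ G', u ∉ A i) ⊆
          (H'.filter fun u => ∀ i ∈ G', u ∉ A i) := by
        intro u hu
        rw [Finset.mem_filter] at hu ⊢
        refine ⟨Finset.mem_filter.mpr ⟨hu.1, hu.2 i₀ (Finset.mem_insert_self _ _)⟩,
          fun i hi => hu.2 i (Finset.mem_insert_of_mem hi)⟩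
      have hx1 : (2 : ℝ) ^ k / M ≤ 1 := by
        rw [div_le_one (by exact_mod_cast hM)]
        exact_mod_cast hkM
      have hx0 : (0 : ℝ) ≤ 1 - 2 ^ k / M := by linarith
      have hH'le : (H'.card : ℝ) ≤ (H.card : ℝ) * (1 - 2 ^ k / M) := by
        have hsplit : (H.filter fun u => u ∈ A i₀).card + H'.card = H.card :=
          Finset.card_filter_add_card_filter_not _
        have hd : (H.card : ℝ) * 2 ^ k / M ≤ ((H.filter fun u => u ∈ A i₀).card : ℝ) := by
          rw [div_le_iff₀ (by exact_mod_cast hM)]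
          calc (H.card : ℝ) * 2 ^ k = ((H.card * 2 ^ k : ℕ) : ℝ) := by push_cast; ring
          _ ≤ ((M * (H.filter fun u => u ∈ A i₀).card : ℕ) : ℝ) := by exact_mod_cast hi₀
          _ = _ := by push_cast; ring
        have : (H'.card : ℝ) = (H.card : ℝ) - ((H.filter fun u => u ∈ A i₀).card : ℝ) := by
          rw [eq_sub_iff_add_eq]
          exact_mod_cast (by rw [add_comm]; exact hsplit)
        rw [this, mul_one_sub]
        have hxd : (H.card : ℝ) * (2 ^ k / M) ≤ ((H.filter fun u => u ∈ A i₀).card : ℝ) := by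
          rw [← mul_div_assoc]; exact hd
        linarith
      calc ((H.filter fun u => ∀ i ∈ insert i₀ G', u ∉ A i).card : ℝ)
          ≤ ((H'.filter fun u => ∀ i ∈ G', u ∉ A i).card : ℝ) := by
            exact_mod_cast Finset.card_le_card hsubset
        _ ≤ (H'.card : ℝ) * (1 - 2 ^ k / M) ^ s := hG'bound
        _ ≤ ((H.card : ℝ) * (1 - 2 ^ k / M)) * (1 - 2 ^ k / M) ^ s := by
            apply mul_le_mul_of_nonneg_right hH'le (pow_nonneg hx0 s)
        _ = (H.card : ℝ) * (1 - 2 ^ k / M) ^ (s + 1) := by ring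


/-- Offline marking-game lemma: from a list of `M` subsets of a universe of size `2^n`
one can select at most `⌈2(n+1)(ln 2)·M·2^{-k}⌉` sets so that every element belonging
to at least `2^k` of the listed sets belongs to a selected set. -/
theorem stmt_9 (n M k : ℕ) {U : Type*} [Fintype U] (hU : Fintype.card U = 2 ^ n)
    (A : Fin M → Finset U) (hk : ((n : ℝ) + 1) * Real.log 2 ≤ 2 ^ k) :
    ∃ G : Finset (Fin M),
      G.card ≤ ⌈2 * ((n : ℝ) + 1) * Real.log 2 * M / 2 ^ k⌉₊ ∧
      ∀ u : U, 2 ^ k ≤ (Finset.univ.filter fun i : Fin M => u ∈ A i).card →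
        ∃ i ∈ G, u ∈ A i := by
  set t := ⌈2 * ((n : ℝ) + 1) * Real.log 2 * M / 2 ^ k⌉₊ with ht
  set H := Finset.univ.filter
    (fun u : U => 2 ^ k ≤ (Finset.univ.filter fun i : Fin M => u ∈ A i).card) with hHdef
  rcases H.eq_empty_or_nonempty with hHe | hne
  · refine ⟨∅, Nat.zero_le _, fun u hu => ?_⟩
    have huH : u ∈ H := Finset.mem_filter.mpr ⟨Finset.mem_univ u, hu⟩
    rw [hHe] at huH
    exact absurd huH (Finset.notMem_empty u)
  obtain ⟨u₀, hu₀⟩ := hne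
  have hu₀' := (Finset.mem_filter.mp hu₀).2
  have hkM : 2 ^ k ≤ M := le_trans hu₀' (by
    simpa using Finset.card_filter_le Finset.univ (fun i : Fin M => u₀ ∈ A i))
  have hM : 0 < M := lt_of_lt_of_le (Nat.pow_pos (by norm_num) : 0 < 2 ^ k) hkM
  have hMr : (0 : ℝ) < M := by exact_mod_cast hM
  have h2k : (0 : ℝ) < 2 ^ k := by positivity
  obtain ⟨G, hGcard, hGbound⟩ := cover_aux M k A t H
    (fun u hu => (Finset.mem_filter.mp hu).2)
  refine ⟨G, hGcard, fun u hu => ?_⟩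
  have huH : u ∈ H := Finset.mem_filter.mpr ⟨Finset.mem_univ u, hu⟩
  -- show the remaining set is empty
  have hx1 : (2 : ℝ) ^ k / M ≤ 1 := by
    rw [div_le_one hMr]; exact_mod_cast hkM
  have hx0 : (0 : ℝ) ≤ 1 - 2 ^ k / M := by linarith
  have hln2 : (0 : ℝ) < Real.log 2 := Real.log_pos (by norm_num)
  have htle : 2 * ((n : ℝ) + 1) * Real.log 2 * M / 2 ^ k ≤ t := Nat.le_ceil _
  have hexp : (1 - 2 ^ k / (M : ℝ)) ^ t ≤ Real.exp (-(2 ^ k / M)) ^ t := by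
    apply pow_le_pow_left₀ hx0
    have := Real.add_one_le_exp (-(2 ^ k / (M : ℝ)))
    linarith
  have hxt : 2 * ((n : ℝ) + 1) * Real.log 2 ≤ (2 ^ k / M) * t := by
    have : 2 * ((n : ℝ) + 1) * Real.log 2 = (2 ^ k / M) *
        (2 * ((n : ℝ) + 1) * Real.log 2 * M / 2 ^ k) := by
      field_simp
    rw [this]
    exact mul_le_mul_of_nonneg_left htle (by positivity)
  have hHcard : (H.card : ℝ) ≤ 2 ^ n := by
    have hsub : H ⊆ Finset.univ := fun u _ => Finset.mem_univ u
    have := Finset.card_le_card hsub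
    rw [Finset.card_univ, hU] at this
    exact_mod_cast this
  have hfinal : (H.card : ℝ) * (1 - 2 ^ k / M) ^ t < 1 := by
    calc (H.card : ℝ) * (1 - 2 ^ k / M) ^ t
        ≤ 2 ^ n * Real.exp (-(2 ^ k / M)) ^ t :=
          mul_le_mul hHcard hexp (pow_nonneg hx0 t) (by positivity)
      _ = Real.exp ((n : ℝ) * Real.log 2) * Real.exp (-((2 ^ k / M) * t)) := by
          rw [← Real.exp_nat_mul, ← Real.exp_log (show (0:ℝ) < 2 ^ n by positivity),
            Real.log_pow]
          push_cast; ring_nf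
      _ = Real.exp ((n : ℝ) * Real.log 2 - (2 ^ k / M) * t) := by
          rw [← Real.exp_add]; ring_nf
      _ < 1 := by
          rw [Real.exp_lt_one_iff]
          have : (n : ℝ) * Real.log 2 < 2 * ((n : ℝ) + 1) * Real.log 2 := by nlinarith
          linarith
  have hrem : (H.filter fun u => ∀ i ∈ G, u ∉ A i) = ∅ := by
    rw [← Finset.card_eq_zero]
    by_contra hc
    have h1 : 1 ≤ ((H.filter fun u => ∀ i ∈ G, u ∉ A i).card : ℝ) := by
      exact_mod_cast Nat.one_le_iff_ne_zero.mpr hc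
    linarith [lt_of_le_of_lt (le_trans h1 hGbound) hfinal]
  by_contra hcon
  push_neg at hcon
  have : u ∈ (H.filter fun u => ∀ i ∈ G, u ∉ A i) :=
    Finset.mem_filter.mpr ⟨huH, fun i hi => hcon i hi⟩
  simp [hrem] at this
end

section
/- Let U be a finite set, C a finite family of subsets of U each of cardinality at most s, and let N, t be natural numbers with t < N ≤ |U|. If |C| · C(N, t+1) · (s / (|U| − t))^{t+1} < 1, then there exists an N-element subset A ⊆ U such that |A ∩ C| ≤ t for every C ∈ C. -/
open scoped Classical

open Finset

lemma aux_count {U : Type*} [Fintype U] [DecidableEq U] (B : Finset U) (N : ℕ)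
    (hBN : B.card ≤ N) :
    (((Finset.univ : Finset U).powersetCard N).filter (fun A => B ⊆ A)).card
      = (Fintype.card U - B.card).choose (N - B.card) := by
  have h1 : (Finset.univ \ B).card = Fintype.card U - B.card := by
    rw [Finset.card_sdiff_of_subset (Finset.subset_univ B), Finset.card_univ]
  rw [← h1, ← Finset.card_powersetCard]
  apply Finset.card_bij (fun A _ => A \ B)
  · intro A hA
    simp only [Finset.mem_filter, Finset.mem_powersetCard] at hA
    obtain ⟨⟨-, hcard⟩, hBA⟩ := hA
    rw [Finset.mem_powersetCard]
    constructor
    · intro x hx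
      simp only [Finset.mem_sdiff] at hx ⊢
      exact ⟨Finset.mem_univ x, hx.2⟩
    · rw [Finset.card_sdiff_of_subset hBA, hcard]
  · intro A hA A' hA' hEq
    simp only [Finset.mem_filter] at hA hA'
    have h2 : A \ B ∪ B = A' \ B ∪ B := by rw [hEq]
    rwa [Finset.sdiff_union_of_subset hA.2, Finset.sdiff_union_of_subset hA'.2] at h2
  · intro A' hA'
    rw [Finset.mem_powersetCard] at hA'
    have hdisj : Disjoint A' B := by
      rw [Finset.disjoint_left]
      intro x hx
      have := hA'.1 hx
      simp only [Finset.mem_sdiff] at this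
      exact this.2
    refine ⟨A' ∪ B, ?_, ?_⟩
    · rw [Finset.mem_filter, Finset.mem_powersetCard]
      refine ⟨⟨Finset.subset_univ _, ?_⟩, Finset.subset_union_right⟩
      rw [Finset.card_union_of_disjoint hdisj, hA'.2]
      omega
    · rw [Finset.union_sdiff_right, Finset.sdiff_eq_self_of_disjoint hdisj]

lemma aux_choose_pow (s u t : ℕ) (htu : t < u) :
    s.choose (t + 1) * (u - t) ^ (t + 1) ≤ s ^ (t + 1) * u.choose (t + 1) := by
  have key : (∏ i ∈ Finset.range (t + 1), (s - i)) * (u - t) ^ (t + 1)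
      ≤ s ^ (t + 1) * ∏ i ∈ Finset.range (t + 1), (u - i) := by
    have e1 : (u - t) ^ (t + 1) = ∏ _i ∈ Finset.range (t + 1), (u - t) := by simp
    have e2 : s ^ (t + 1) = ∏ _i ∈ Finset.range (t + 1), s := by simp
    rw [e1, e2, ← Finset.prod_mul_distrib, ← Finset.prod_mul_distrib]
    apply Finset.prod_le_prod'
    intro i hi
    rw [Finset.mem_range] at hi
    rcases le_or_gt i s with his | his
    · have hiu : i ≤ u := by omega
      have htu' : t ≤ u := by omega
      zify [his, htu', hiu]
      have h1 : (i : ℤ) ≤ t := by exact_mod_cast Nat.le_of_lt_succ hi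
      have h2 : (t : ℤ) ≤ u := by exact_mod_cast htu'
      have h3 : (0 : ℤ) ≤ s := by positivity
      have h4 : (0 : ℤ) ≤ i := by positivity
      nlinarith [mul_le_mul_of_nonneg_left h1 h3, mul_le_mul_of_nonneg_left h2 h4]
    · rw [Nat.sub_eq_zero_of_le (le_of_lt his)]
      simp
  have h2 : (t + 1).factorial * (s.choose (t + 1) * (u - t) ^ (t + 1))
      ≤ (t + 1).factorial * (s ^ (t + 1) * u.choose (t + 1)) := by
    calc (t + 1).factorial * (s.choose (t + 1) * (u - t) ^ (t + 1))
        = s.descFactorial (t + 1) * (u - t) ^ (t + 1) := by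
          rw [Nat.descFactorial_eq_factorial_mul_choose]; ring
      _ = (∏ i ∈ Finset.range (t + 1), (s - i)) * (u - t) ^ (t + 1) := by
          rw [Nat.descFactorial_eq_prod_range]
      _ ≤ s ^ (t + 1) * ∏ i ∈ Finset.range (t + 1), (u - i) := key
      _ = s ^ (t + 1) * u.descFactorial (t + 1) := by rw [Nat.descFactorial_eq_prod_range]
      _ = (t + 1).factorial * (s ^ (t + 1) * u.choose (t + 1)) := by
          rw [Nat.descFactorial_eq_factorial_mul_choose]; ring
  exact Nat.le_of_mul_le_mul_left h2 (Nat.factorial_pos _)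

/-- In a large universe one can choose an `N`-element set with small intersection with
every set of a given small family of small sets. -/
theorem stmt_11 {U : Type*} [Fintype U] [DecidableEq U] (C : Finset (Finset U)) (s N t : ℕ)
    (hs : ∀ c ∈ C, c.card ≤ s) (htN : t < N) (hNU : N ≤ Fintype.card U)
    (h : (C.card : ℝ) * (N.choose (t + 1)) *
        ((s : ℝ) / ((Fintype.card U : ℝ) - t)) ^ (t + 1) < 1) :
    ∃ A : Finset U, A.card = N ∧ ∀ c ∈ C, (A ∩ c).card ≤ t := by
  classical
  set u := Fintype.card U with hu
  set M := (u - (t + 1)).choose (N - (t + 1)) with hMdef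
  set 𝒜 := (Finset.univ : Finset U).powersetCard N with h𝒜
  set bad := 𝒜.filter (fun A => ∃ c ∈ C, t + 1 ≤ (A ∩ c).card) with hbaddef
  have ht_u : t < u := lt_of_lt_of_le htN hNU
  have hAcard : 𝒜.card = u.choose N := by
    rw [h𝒜, Finset.card_powersetCard, Finset.card_univ]
  -- bound on the number of bad sets
  have hbad : bad.card ≤ C.card * (s.choose (t + 1) * M) := by
    have hsub : bad ⊆ C.biUnion (fun c => (c.powersetCard (t + 1)).biUnion
        (fun B => 𝒜.filter (fun A => B ⊆ A))) := by
      intro A hA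
      simp only [hbaddef, Finset.mem_filter] at hA
      obtain ⟨hA𝒜, c, hc, hcard⟩ := hA
      obtain ⟨B, hBsub, hBcard⟩ := Finset.exists_subset_card_eq hcard
      rw [Finset.mem_biUnion]
      exact ⟨c, hc, Finset.mem_biUnion.2 ⟨B,
        Finset.mem_powersetCard.2 ⟨hBsub.trans Finset.inter_subset_right, hBcard⟩,
        Finset.mem_filter.2 ⟨hA𝒜, hBsub.trans Finset.inter_subset_left⟩⟩⟩
    calc bad.card ≤ _ := Finset.card_le_card hsub
      _ ≤ ∑ c ∈ C, ((c.powersetCard (t + 1)).biUnion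
            (fun B => 𝒜.filter (fun A => B ⊆ A))).card := Finset.card_biUnion_le
      _ ≤ ∑ _c ∈ C, (s.choose (t + 1) * M) := by
          apply Finset.sum_le_sum
          intro c hc
          calc ((c.powersetCard (t + 1)).biUnion (fun B => 𝒜.filter (fun A => B ⊆ A))).card
              ≤ ∑ B ∈ c.powersetCard (t + 1), (𝒜.filter (fun A => B ⊆ A)).card :=
                Finset.card_biUnion_le
            _ = ∑ _B ∈ c.powersetCard (t + 1), M := by
                apply Finset.sum_congr rfl
                intro B hB
                have hBc : B.card = t + 1 := (Finset.mem_powersetCard.1 hB).2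
                rw [h𝒜, aux_count B N (by omega), hBc, hMdef, hu]
            _ = c.card.choose (t + 1) * M := by
                rw [Finset.sum_const, Finset.card_powersetCard, smul_eq_mul]
            _ ≤ s.choose (t + 1) * M :=
                Nat.mul_le_mul_right _ (Nat.choose_le_choose _ (hs c hc))
      _ = C.card * (s.choose (t + 1) * M) := by rw [Finset.sum_const, smul_eq_mul]
  -- choose identity
  have hM : u.choose N * N.choose (t + 1) = u.choose (t + 1) * M :=
    Nat.choose_mul (n := u) (k := N) (s := t + 1) (by omega)
  have hc2 : 0 < u.choose N := Nat.choose_pos hNU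
  have hcast : ((u - t : ℕ) : ℝ) = (u : ℝ) - t := by
    exact_mod_cast Nat.cast_sub ht_u.le
  have hbR : (0 : ℝ) < (u : ℝ) - t := by
    rw [← hcast]
    exact_mod_cast Nat.sub_pos_of_lt ht_u
  have hnat := aux_choose_pow s u t ht_u
  have hr : (s.choose (t + 1) : ℝ) * ((u : ℝ) - t) ^ (t + 1)
      ≤ (s : ℝ) ^ (t + 1) * (u.choose (t + 1) : ℝ) := by
    rw [← hcast]
    exact_mod_cast hnat
  have hb : (0 : ℝ) < ((u : ℝ) - t) ^ (t + 1) := by positivity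
  have hMid : (u.choose (t + 1) : ℝ) * M = (u.choose N : ℝ) * N.choose (t + 1) := by
    exact_mod_cast congrArg (Nat.cast : ℕ → ℝ) hM.symm
  have keyreal : (s.choose (t + 1) : ℝ) * (M : ℝ)
      ≤ (N.choose (t + 1) : ℝ) * ((s : ℝ) / ((u : ℝ) - t)) ^ (t + 1) * (u.choose N : ℝ) := by
    have expand : (N.choose (t + 1) : ℝ) * ((s : ℝ) / ((u : ℝ) - t)) ^ (t + 1) * (u.choose N : ℝ)
        = ((s : ℝ) ^ (t + 1) * (u.choose (t + 1) : ℝ)) * (M : ℝ) / (((u : ℝ) - t) ^ (t + 1)) := by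
      rw [div_pow, eq_div_iff hb.ne']
      field_simp
      linear_combination (-(s : ℝ) * (s : ℝ) ^ t) * hMid
    rw [expand, le_div_iff₀ hb]
    calc (s.choose (t + 1) : ℝ) * M * ((u : ℝ) - t) ^ (t + 1)
        = (s.choose (t + 1) : ℝ) * ((u : ℝ) - t) ^ (t + 1) * M := by ring
      _ ≤ (s : ℝ) ^ (t + 1) * (u.choose (t + 1) : ℝ) * M :=
          mul_le_mul_of_nonneg_right hr (Nat.cast_nonneg _)
  have hlt : bad.card < 𝒜.card := by
    rw [hAcard]
    have final : (bad.card : ℝ) < (u.choose N : ℝ) := by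
      calc (bad.card : ℝ) ≤ ((C.card * (s.choose (t + 1) * M) : ℕ) : ℝ) := Nat.cast_le.2 hbad
        _ = (C.card : ℝ) * ((s.choose (t + 1) : ℝ) * M) := by push_cast; ring
        _ ≤ (C.card : ℝ) * ((N.choose (t + 1) : ℝ) * ((s : ℝ) / ((u : ℝ) - t)) ^ (t + 1)
              * (u.choose N : ℝ)) := mul_le_mul_of_nonneg_left keyreal (Nat.cast_nonneg _)
        _ = ((C.card : ℝ) * (N.choose (t + 1)) * ((s : ℝ) / ((u : ℝ) - t)) ^ (t + 1))
              * (u.choose N : ℝ) := by ring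
        _ < 1 * (u.choose N : ℝ) := by
            apply mul_lt_mul_of_pos_right h (by exact_mod_cast hc2)
        _ = (u.choose N : ℝ) := one_mul _
    exact_mod_cast final
  obtain ⟨A, hA⟩ : (𝒜 \ bad).Nonempty := by
    rw [Finset.sdiff_nonempty]
    intro hsub2
    exact absurd (Finset.card_le_card hsub2) (not_le.2 hlt)
  rw [Finset.mem_sdiff] at hA
  refine ⟨A, (Finset.mem_powersetCard.1 hA.1).2, ?_⟩
  intro c hc
  by_contra hcon
  exact hA.2 (Finset.mem_filter.2 ⟨hA.1, c, hc, by omega⟩)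
end

section
/- Fix a real α ∈ (0, 1/2). There exists n₀ such that for all n ≥ n₀ the following holds: let r = ⌊α·n⌋, let V = ∑_{i=0}^{r} C(n,i), and let N = ⌊2^n / V⌋. Then there exists a set E ⊆ {0,1}^n with |E| = N such that every Hamming ball of radius r in {0,1}^n contains at most n elements of E. -/
open scoped Classical

private lemma aux_pow_le (a c : ℕ) : ∀ k : ℕ, (a + c) ^ (k + 1) ≤ a ^ (k + 1) + (k + 1) * c * (a + c) ^ k := by
  intro k
  induction k with
  | zero => simp
  | succ k ih =>
    calc (a + c) ^ (k + 2) = (a + c) * (a + c) ^ (k + 1) := by ring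
      _ ≤ (a + c) * (a ^ (k + 1) + (k + 1) * c * (a + c) ^ k) := Nat.mul_le_mul_left _ ih
      _ = a ^ (k + 2) + c * a ^ (k + 1) + (k + 1) * c * (a + c) ^ (k + 1) := by ring
      _ ≤ a ^ (k + 2) + c * (a + c) ^ (k + 1) + (k + 1) * c * (a + c) ^ (k + 1) := by
          gcongr
          exact Nat.le_add_right a c
      _ = a ^ (k + 2) + (k + 2) * c * (a + c) ^ (k + 1) := by ring

private lemma two_pow_lt_factorial' {n : ℕ} (hn : 5 ≤ n) : 2 ^ (n + 1) < (n + 1).factorial := by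
  induction n, hn using Nat.le_induction with
  | base => norm_num [Nat.factorial]
  | succ n hn ih =>
    rw [pow_succ, Nat.factorial_succ]
    calc 2 ^ (n + 1) * 2 < (n + 1).factorial * 2 := by omega
      _ ≤ (n + 1 + 1) * (n + 1).factorial := by nlinarith [Nat.factorial_pos (n + 1)]

private lemma poly_le_two_pow' {n : ℕ} (hn : 10 ≤ n) : 2 * n * (n + 1) ≤ 2 ^ n := by
  induction n, hn using Nat.le_induction with
  | base => norm_num
  | succ n hn ih =>
    rw [pow_succ]
    nlinarith

private lemma ball_card_le {n r : ℕ} (y : Fin n → Bool) :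
    ((Finset.univ : Finset (Fin n → Bool)).filter fun x => hammingDist x y ≤ r).card
      ≤ ∑ i ∈ Finset.range (r + 1), n.choose i := by
  classical
  have hinj : ∀ x₁ ∈ (Finset.univ : Finset (Fin n → Bool)).filter
        (fun x => hammingDist x y ≤ r),
      ∀ x₂ ∈ (Finset.univ : Finset (Fin n → Bool)).filter (fun x => hammingDist x y ≤ r),
      ((Finset.univ : Finset (Fin n)).filter fun j => x₁ j ≠ y j) =
        ((Finset.univ : Finset (Fin n)).filter fun j => x₂ j ≠ y j) → x₁ = x₂ := by
    intro x₁ _ x₂ _ h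
    funext j
    have hj := Finset.ext_iff.mp h j
    simp only [Finset.mem_filter, Finset.mem_univ, true_and] at hj
    revert hj
    cases x₁ j <;> cases x₂ j <;> cases y j <;> simp
  have hmaps : ∀ x ∈ (Finset.univ : Finset (Fin n → Bool)).filter
        (fun x => hammingDist x y ≤ r),
      ((Finset.univ : Finset (Fin n)).filter fun j => x j ≠ y j) ∈
        (Finset.range (r + 1)).biUnion fun i =>
          (Finset.univ : Finset (Fin n)).powersetCard i := by
    intro x hx
    simp only [Finset.mem_filter, Finset.mem_univ, true_and] at hx
    simp only [Finset.mem_biUnion, Finset.mem_range, Finset.mem_powersetCard]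
    refine ⟨hammingDist x y, Nat.lt_succ_of_le hx, Finset.subset_univ _, ?_⟩
    simp [hammingDist]
  refine (Finset.card_le_card_of_injOn _ hmaps hinj).trans ?_
  refine Finset.card_biUnion_le.trans (Finset.sum_le_sum fun i _ => ?_)
  rw [Finset.card_powersetCard, Finset.card_univ, Fintype.card_fin]

private lemma numeric_key {n V N : ℕ} (hn : 10 ≤ n) (hVN : V * N ≤ 2 ^ n)
    (hkN : n + 1 ≤ N) (hNM : N ≤ 2 ^ n) :
    2 ^ n * (V.choose (n + 1) * (2 ^ n - (n + 1)).choose (N - (n + 1))) < (2 ^ n).choose N := by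
  set M := 2 ^ n with hMdef
  set k := n + 1 with hkdef
  have hnM : n < M := Nat.lt_two_pow_self
  have hkM : k ≤ M := hkN.trans hNM
  have b1 : k.factorial * V.choose k ≤ V ^ k :=
    (Nat.descFactorial_eq_factorial_mul_choose V k) ▸ Nat.descFactorial_le_pow V k
  have b2 : k.factorial * N.choose k ≤ N ^ k :=
    (Nat.descFactorial_eq_factorial_mul_choose N k) ▸ Nat.descFactorial_le_pow N k
  have b3 : (M + 1 - k) ^ k ≤ k.factorial * M.choose k :=
    (Nat.descFactorial_eq_factorial_mul_choose M k) ▸ Nat.pow_sub_le_descFactorial M k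
  have hM1k : M + 1 - k = M - n := by omega
  -- core numeric inequality : M ^ (n + 2) < (M - n) ^ (n + 1) * (n + 1)!
  have haux : M ^ (n + 1) ≤ (M - n) ^ (n + 1) + (n + 1) * n * M ^ n := by
    have h := aux_pow_le (M - n) n n
    have : M - n + n = M := by omega
    rwa [this] at h
  have hhalf : M ^ (n + 1) ≤ 2 * (M - n) ^ (n + 1) := by
    have hp : 2 * ((n + 1) * n * M ^ n) ≤ M ^ (n + 1) := by
      have : 2 * n * (n + 1) ≤ M := poly_le_two_pow' hn
      calc 2 * ((n + 1) * n * M ^ n) = (2 * n * (n + 1)) * M ^ n := by ring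
        _ ≤ M * M ^ n := Nat.mul_le_mul_right _ this
        _ = M ^ (n + 1) := by ring
    omega
  have hcore : M ^ (n + 2) < (M - n) ^ (n + 1) * (n + 1).factorial := by
    calc M ^ (n + 2) = M * M ^ (n + 1) := by ring
      _ ≤ M * (2 * (M - n) ^ (n + 1)) := Nat.mul_le_mul_left _ hhalf
      _ = 2 ^ (n + 1) * (M - n) ^ (n + 1) := by rw [hMdef]; ring
      _ < (n + 1).factorial * (M - n) ^ (n + 1) := by
          have h1 : 2 ^ (n + 1) < (n + 1).factorial := two_pow_lt_factorial' (by omega)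
          have h2 : 0 < (M - n) ^ (n + 1) := Nat.pow_pos (by omega)
          exact Nat.mul_lt_mul_of_lt_of_le h1 (le_refl _) h2
      _ = (M - n) ^ (n + 1) * (n + 1).factorial := by ring
  -- key : M * (V.choose k * N.choose k) < M.choose k
  have key : M * (V.choose k * N.choose k) < M.choose k := by
    have hchain : M * (V.choose k * N.choose k) * (k.factorial * k.factorial)
        < M.choose k * (k.factorial * k.factorial) := by
      calc M * (V.choose k * N.choose k) * (k.factorial * k.factorial)
          = M * ((k.factorial * V.choose k) * (k.factorial * N.choose k)) := by ring
        _ ≤ M * (V ^ k * N ^ k) := Nat.mul_le_mul_left _ (Nat.mul_le_mul b1 b2)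
        _ = M * (V * N) ^ k := by rw [mul_pow]
        _ ≤ M * M ^ k := Nat.mul_le_mul_left _ (Nat.pow_le_pow_left hVN k)
        _ = M ^ (n + 2) := by rw [hkdef]; ring
        _ < (M - n) ^ (n + 1) * (n + 1).factorial := hcore
        _ = (M + 1 - k) ^ k * k.factorial := by rw [hM1k]
        _ ≤ (k.factorial * M.choose k) * k.factorial := Nat.mul_le_mul_right _ b3
        _ = M.choose k * (k.factorial * k.factorial) := by ring
    exact Nat.lt_of_mul_lt_mul_right hchain
  -- transfer via the subset-chain identity
  have hD : 0 < (M - k).choose (N - k) := Nat.choose_pos (by omega)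
  have hid : M.choose N * N.choose k = M.choose k * (M - k).choose (N - k) :=
    Nat.choose_mul hkN
  have final : (M * (V.choose k * (M - k).choose (N - k))) * N.choose k
      < M.choose N * N.choose k := by
    calc (M * (V.choose k * (M - k).choose (N - k))) * N.choose k
        = (M * (V.choose k * N.choose k)) * (M - k).choose (N - k) := by ring
      _ < M.choose k * (M - k).choose (N - k) := Nat.mul_lt_mul_of_lt_of_le key (le_refl _) hD
      _ = M.choose N * N.choose k := hid.symm
  exact Nat.lt_of_mul_lt_mul_right final

/-- Existence of list-decodable sets: for fixed `α ∈ (0,1/2)` and all large `n` there is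
a set `E ⊆ {0,1}^n` of cardinality `⌊2^n/V⌋` such that every Hamming ball of radius
`⌊α·n⌋` contains at most `n` elements of `E`. -/
theorem stmt_12 (α : ℝ) (hα0 : 0 < α) (hα1 : α < 1 / 2) :
    ∃ n₀ : ℕ, ∀ n ≥ n₀,
      ∃ E : Finset (Fin n → Bool),
        E.card = 2 ^ n / (∑ i ∈ Finset.range (⌊α * n⌋₊ + 1), n.choose i) ∧
        ∀ y : Fin n → Bool,
          (E.filter fun x => hammingDist x y ≤ ⌊α * n⌋₊).card ≤ n := by
  refine ⟨10, fun n hn => ?_⟩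
  set r := ⌊α * (n : ℝ)⌋₊ with hrdef
  set V := ∑ i ∈ Finset.range (r + 1), n.choose i with hVdef
  set N := 2 ^ n / V with hNdef
  have hM : Fintype.card (Fin n → Bool) = 2 ^ n := by simp
  have hV1 : 1 ≤ V := by
    have h0 : n.choose 0 ≤ V :=
      Finset.single_le_sum (f := fun i => n.choose i) (fun i _ => Nat.zero_le _)
        (Finset.mem_range.mpr (Nat.succ_pos r))
    simpa using h0
  have hNM : N ≤ 2 ^ n := Nat.div_le_self _ _
  have hVN : V * N ≤ 2 ^ n := by
    rw [mul_comm]; exact Nat.div_mul_le_self _ _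
  by_cases hNn : N ≤ n
  · obtain ⟨E, -, hE⟩ := Finset.exists_subset_card_eq (s := (Finset.univ : Finset (Fin n → Bool))) (n := N)
      (by rw [Finset.card_univ, hM]; exact hNM)
    exact ⟨E, hE, fun y => le_trans (le_trans (Finset.card_filter_le _ _) hE.le) hNn⟩
  by_contra hcon
  push_neg at hcon
  have hkN : n + 1 ≤ N := by omega
  set S := (Finset.univ : Finset (Fin n → Bool)).powersetCard N with hSdef
  have hScard : S.card = (2 ^ n).choose N := by
    rw [hSdef, Finset.card_powersetCard, Finset.card_univ, hM]
  -- every element of S is "bad" for some center y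
  have cover : S ⊆ Finset.univ.biUnion (fun y : Fin n → Bool =>
      S.filter (fun E => n < (E.filter fun x => hammingDist x y ≤ r).card)) := by
    intro E hE
    have hEcard : E.card = N := (Finset.mem_powersetCard.mp hE).2
    obtain ⟨y, hy⟩ := hcon E hEcard
    exact Finset.mem_biUnion.mpr ⟨y, Finset.mem_univ _, Finset.mem_filter.mpr ⟨hE, hy⟩⟩
  -- count subsets containing a fixed (n+1)-set
  have perT : ∀ T : Finset (Fin n → Bool), T.card = n + 1 →
      (S.filter fun E => T ⊆ E).card ≤ (2 ^ n - (n + 1)).choose (N - (n + 1)) := by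
    intro T hT
    have hmaps : ∀ E ∈ S.filter (fun E => T ⊆ E),
        E \ T ∈ (Finset.univ \ T).powersetCard (N - (n + 1)) := by
      intro E hE
      rw [Finset.mem_filter] at hE
      have hEcard : E.card = N := (Finset.mem_powersetCard.mp hE.1).2
      rw [Finset.mem_powersetCard]
      refine ⟨Finset.sdiff_subset_sdiff (Finset.subset_univ _) (le_refl _), ?_⟩
      rw [Finset.card_sdiff_of_subset hE.2, hEcard, hT]
    have hinj : ∀ E₁ ∈ S.filter (fun E => T ⊆ E), ∀ E₂ ∈ S.filter (fun E => T ⊆ E),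
        E₁ \ T = E₂ \ T → E₁ = E₂ := by
      intro E₁ h₁ E₂ h₂ h
      rw [Finset.mem_filter] at h₁ h₂
      rw [← Finset.sdiff_union_of_subset h₁.2, ← Finset.sdiff_union_of_subset h₂.2, h]
    refine (Finset.card_le_card_of_injOn _ hmaps hinj).trans ?_
    rw [Finset.card_powersetCard, Finset.card_sdiff_of_subset (Finset.subset_univ _), Finset.card_univ,
      hM, hT]
  -- per-center count
  have perY : ∀ y : Fin n → Bool,
      (S.filter (fun E => n < (E.filter fun x => hammingDist x y ≤ r).card)).card
        ≤ V.choose (n + 1) * (2 ^ n - (n + 1)).choose (N - (n + 1)) := by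
    intro y
    set B := (Finset.univ : Finset (Fin n → Bool)).filter
      (fun x => hammingDist x y ≤ r) with hBdef
    have hsub : S.filter (fun E => n < (E.filter fun x => hammingDist x y ≤ r).card)
        ⊆ (B.powersetCard (n + 1)).biUnion (fun T => S.filter fun E => T ⊆ E) := by
      intro E hE
      rw [Finset.mem_filter] at hE
      obtain ⟨T, hTsub, hTcard⟩ :=
        Finset.exists_subset_card_eq (s := E.filter fun x => hammingDist x y ≤ r) (n := n + 1) (Nat.succ_le_of_lt hE.2)
      refine Finset.mem_biUnion.mpr ⟨T, ?_, ?_⟩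
      · rw [Finset.mem_powersetCard]
        refine ⟨hTsub.trans ?_, hTcard⟩
        intro x hx
        rw [Finset.mem_filter] at hx ⊢
        exact ⟨Finset.mem_univ _, hx.2⟩
      · exact Finset.mem_filter.mpr ⟨hE.1, hTsub.trans (Finset.filter_subset _ _)⟩
    calc (S.filter (fun E => n < (E.filter fun x => hammingDist x y ≤ r).card)).card
        ≤ ∑ T ∈ B.powersetCard (n + 1), (S.filter fun E => T ⊆ E).card :=
          (Finset.card_le_card hsub).trans Finset.card_biUnion_le
      _ ≤ (B.powersetCard (n + 1)).card * (2 ^ n - (n + 1)).choose (N - (n + 1)) := by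
          simpa using Finset.sum_le_card_nsmul _ _ _
            (fun T hT => perT T (Finset.mem_powersetCard.mp hT).2)
      _ ≤ V.choose (n + 1) * (2 ^ n - (n + 1)).choose (N - (n + 1)) := by
          rw [Finset.card_powersetCard]
          exact Nat.mul_le_mul_right _ (Nat.choose_le_choose _ (ball_card_le y))
  -- total count
  have total : (2 ^ n).choose N
      ≤ 2 ^ n * (V.choose (n + 1) * (2 ^ n - (n + 1)).choose (N - (n + 1))) := by
    calc (2 ^ n).choose N = S.card := hScard.symm
      _ ≤ ∑ y : Fin n → Bool,
            (S.filter (fun E => n < (E.filter fun x => hammingDist x y ≤ r).card)).card :=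
          (Finset.card_le_card cover).trans Finset.card_biUnion_le
      _ ≤ 2 ^ n * (V.choose (n + 1) * (2 ^ n - (n + 1)).choose (N - (n + 1))) := by
          have h := Finset.sum_le_card_nsmul Finset.univ
            (fun y : Fin n → Bool =>
              (S.filter (fun E => n < (E.filter fun x => hammingDist x y ≤ r).card)).card)
            (V.choose (n + 1) * (2 ^ n - (n + 1)).choose (N - (n + 1)))
            (fun y _ => perY y)
          simpa [Finset.card_univ, hM] using h
  exact absurd total (not_le.mpr (numeric_key hn hVN hkN hNM))
end
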